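/- Let A_0, …, A_4 be positive semidefinite matrices in M_d(ℂ) with A_k A_{k+2} = 0 for all k ∈ ℤ/5ℤ (indices mod 5), and suppose each A_{k+1} lies in the real span of A_k, A_{k+2}, A_{k+3}, and Tr(A_k A_{k+1}) > 0 for every k. Then ℝ·A_0 = ℝ·A_1, i.e., A_0 and A_1 are proportional. -/

import Mathlib

open scoped ComplexOrder
open Matrix

lemma pent_trace_sq {d : ℕ} (B : Matrix (Fin d) (Fin d) ℂ) :
    ∃ t : ℝ, 0 ≤ t ∧ (Bᴴ * B).trace = (t : ℂ) := by
  refine ⟨∑ j, ∑ i, Complex.normSq (B i j),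
    Finset.sum_nonneg fun j _ => Finset.sum_nonneg fun i _ => Complex.normSq_nonneg _, ?_⟩
  simp only [Matrix.trace, Matrix.diag, Matrix.mul_apply, Matrix.conjTranspose_apply]
  push_cast
  congr 1; ext j; congr 1; ext i
  rw [Complex.normSq_eq_conj_mul_self]
  rfl

lemma pent_smul_psd {d : ℕ} (c : ℝ) (hc : 0 ≤ c) (M : Matrix (Fin d) (Fin d) ℂ)
    (hM : M.PosSemidef) : (c • M).PosSemidef := by
  constructor
  · show (c • M)ᴴ = c • M
    rw [Matrix.conjTranspose_smul, star_trivial, hM.1.eq]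
  · exact (hM.smul hc).2

lemma pent_mem_triple {d : ℕ} {M x y z : Matrix (Fin d) (Fin d) ℂ}
    (h : M ∈ Submodule.span ℝ ({x, y, z} : Set (Matrix (Fin d) (Fin d) ℂ))) :
    ∃ a b c : ℝ, M = a • x + b • y + c • z := by
  rw [Submodule.mem_span_insert] at h
  obtain ⟨a, w1, hw1, rfl⟩ := h
  rw [Submodule.mem_span_insert] at hw1
  obtain ⟨b, w2, hw2, rfl⟩ := hw1
  rw [Submodule.mem_span_singleton] at hw2
  obtain ⟨c, rfl⟩ := hw2
  exact ⟨a, b, c, by abel⟩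

theorem pentagon_algebraic_core {d : ℕ} (A : ZMod 5 → Matrix (Fin d) (Fin d) ℂ)
    (hpos : ∀ k, (A k).PosSemidef)
    (horth : ∀ k : ZMod 5, A k * A (k + 2) = 0)
    (hspan : ∀ k : ZMod 5,
      A (k + 1) ∈ Submodule.span ℝ ({A k, A (k + 2), A (k + 3)} : Set (Matrix (Fin d) (Fin d) ℂ)))
    (htr : ∀ k : ZMod 5, ∃ r : ℝ, 0 < r ∧ (A k * A (k + 1)).trace = (r : ℂ)) :
    Submodule.span ℝ ({A 0} : Set (Matrix (Fin d) (Fin d) ℂ))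
      = Submodule.span ℝ ({A 1} : Set (Matrix (Fin d) (Fin d) ℂ)) := by
  -- adjoint trick
  have herm : ∀ k, (A k)ᴴ = A k := fun k => (hpos k).1
  have horth' : ∀ k : ZMod 5, A (k + 2) * A k = 0 := by
    intro k
    have := congrArg Matrix.conjTranspose (horth k)
    rwa [Matrix.conjTranspose_mul, herm, herm, Matrix.conjTranspose_zero] at this
  have z02 : A 0 * A 2 = 0 := by simpa using horth 0
  have z20 : A 2 * A 0 = 0 := by simpa using horth' 0
  have z30 : A 3 * A 0 = 0 := by simpa [show (3:ZMod 5)+2 = 0 from by decide] using horth 3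
  have z03 : A 0 * A 3 = 0 := by simpa [show (3:ZMod 5)+2 = 0 from by decide] using horth' 3
  have z41 : A 4 * A 1 = 0 := by simpa [show (4:ZMod 5)+2 = 1 from by decide] using horth 4
  have z13 : A 1 * A 3 = 0 := by simpa [show (1:ZMod 5)+2 = 3 from by decide] using horth 1
  have z31 : A 3 * A 1 = 0 := by simpa [show (1:ZMod 5)+2 = 3 from by decide] using horth' 1
  obtain ⟨p, q, s, h0⟩ := pent_mem_triple (by simpa using hspan 0)
  obtain ⟨u, v, w, h1⟩ := pent_mem_triple (hspan 1)
  obtain ⟨x, y, z, h4⟩ := pent_mem_triple (hspan 4)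
  have e11 : (1:ZMod 5)+1 = 2 := by decide
  have e12 : (1:ZMod 5)+2 = 3 := by decide
  have e13 : (1:ZMod 5)+3 = 4 := by decide
  have e41 : (4:ZMod 5)+1 = 0 := by decide
  have e42 : (4:ZMod 5)+2 = 1 := by decide
  have e43 : (4:ZMod 5)+3 = 2 := by decide
  rw [e11, e12, e13] at h1
  rw [e41, e42, e43] at h4
  -- key product identities
  have E1 : A 0 * A 1 = p • (A 0 * A 0) := by
    rw [h0]
    simp [Matrix.mul_add, Matrix.mul_smul, z02, z03]
  have E3 : A 2 * A 1 = u • (A 1 * A 1) := by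
    rw [h1]
    simp [Matrix.add_mul, Matrix.smul_mul, z31, z41]
  have E4 : A 0 * A 1 = (y + z * u) • (A 1 * A 1) := by
    rw [h4]
    simp only [Matrix.add_mul, Matrix.smul_mul, z41, E3, smul_zero, zero_add, smul_smul]
    rw [add_smul]
  obtain ⟨r, hr, htr0⟩ := htr 0
  obtain ⟨t0, ht0, htrA0⟩ : ∃ t : ℝ, 0 ≤ t ∧ (A 0 * A 0).trace = (t : ℂ) := by
    have := pent_trace_sq (A 0); rwa [herm 0] at this
  obtain ⟨t1, ht1, htrA1⟩ : ∃ t : ℝ, 0 ≤ t ∧ (A 1 * A 1).trace = (t : ℂ) := by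
    have := pent_trace_sq (A 1); rwa [herm 1] at this
  have htr0' : (A 0 * A 1).trace = (r : ℂ) := by simpa using htr0
  -- trace computations
  have hp : p * t0 = r := by
    have := congrArg Matrix.trace E1
    rw [htr0', Matrix.trace_smul, htrA0, Complex.real_smul] at this
    exact_mod_cast this.symm
  set β := y + z * u with hβ
  have hb : β * t1 = r := by
    have := congrArg Matrix.trace E4
    rw [htr0', Matrix.trace_smul, htrA1, Complex.real_smul] at this
    exact_mod_cast this.symm
  have hppos : 0 < p := by
    rcases lt_or_ge 0 p with h | h
    · exact h
    · nlinarith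
  have hbpos : 0 < β := by
    rcases lt_or_ge 0 β with h | h
    · exact h
    · nlinarith
  -- square root step
  set c := Real.sqrt (β / p) with hc
  have hcpos : 0 < c := Real.sqrt_pos.mpr (by positivity)
  have hsq : A 0 ^ 2 = (c • A 1) ^ 2 := by
    rw [smul_pow, hc, Real.sq_sqrt (by positivity : (0:ℝ) ≤ β / p)]
    rw [pow_two, pow_two]
    have hXY : p • (A 0 * A 0) = β • (A 1 * A 1) := by rw [← E1, E4]
    rw [div_eq_inv_mul, ← smul_smul, ← hXY, smul_smul,
      inv_mul_cancel₀ hppos.ne', one_smul]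
  have hA01 : A 0 = c • A 1 :=
    open scoped MatrixOrder in
    (CFC.sq_eq_sq_iff (A 0) (c • A 1) (hpos 0).nonneg
      (pent_smul_psd c hcpos.le (A 1) (hpos 1)).nonneg).mp hsq
  have hA10 : A 1 = c⁻¹ • A 0 := by
    rw [hA01, smul_smul, inv_mul_cancel₀ hcpos.ne', one_smul]
  apply le_antisymm
  · rw [Submodule.span_le, Set.singleton_subset_iff, SetLike.mem_coe,
      Submodule.mem_span_singleton]
    exact ⟨c, hA01.symm⟩
  · rw [Submodule.span_le, Set.singleton_subset_iff, SetLike.mem_coe,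
      Submodule.mem_span_singleton]
    exact ⟨c⁻¹, hA10.symm⟩
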